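/- Let Θ ⊆ ℝ be bounded with M := sup_{θ∈Θ} |θ - θ₀| for a fixed θ₀ ∈ Θ. Let g₀ be a probability measure on Θ supported on at most J points, and let g be any probability measure on Θ. Define m_{k,ν} := ∫ (θ-θ₀)^k dν(θ). Then for every integer k > 2J, |m_{k,g} - m_{k,g₀}| ≤ k·(M+1)^{2Jk} · max_{1≤j≤2J} |m_{j,g} - m_{j,g₀}|. -/

import Mathlib

open MeasureTheory Polynomial Finset

private def Dom (p q : Polynomial ℝ) : Prop := ∀ i, |p.coeff i| ≤ q.coeff i

private lemma dom_mul {p₁ p₂ q₁ q₂ : Polynomial ℝ} (h₁ : Dom p₁ q₁) (h₂ : Dom p₂ q₂) :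
    Dom (p₁ * p₂) (q₁ * q₂) := by
  intro n
  rw [coeff_mul, coeff_mul]
  refine (Finset.abs_sum_le_sum_abs _ _).trans (Finset.sum_le_sum fun x _ => ?_)
  rw [abs_mul]
  exact mul_le_mul (h₁ _) (h₂ _) (abs_nonneg _) ((abs_nonneg _).trans (h₁ _))

private lemma dom_one : Dom (1 : Polynomial ℝ) 1 := by
  intro i
  rcases i with _ | i <;> simp [Polynomial.coeff_one]

private lemma dom_prod {α : Type*} (s : Finset α) (f g : α → Polynomial ℝ)
    (h : ∀ a ∈ s, Dom (f a) (g a)) : Dom (∏ a ∈ s, f a) (∏ a ∈ s, g a) := by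
  classical
  induction s using Finset.induction with
  | empty => simpa using dom_one
  | insert _ _ hx ih =>
      rename_i a s'
      rw [Finset.prod_insert hx, Finset.prod_insert hx]
      exact dom_mul (h a (Finset.mem_insert_self a s'))
        (ih fun b hb => h b (Finset.mem_insert_of_mem hb))

private lemma dom_base (b : ℝ) : Dom (X - C b) (X + C |b|) := by
  intro i
  match i with
  | 0 => simp
  | 1 => simp
  | (n+2) => simp [coeff_X, coeff_C]

private lemma sum_abs_coeff_le {p q : Polynomial ℝ} (h : Dom p q) (N : ℕ) :
    ∑ i ∈ Finset.range N, |p.coeff i| ≤ q.eval 1 := by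
  have h0 : ∀ i, 0 ≤ q.coeff i := fun i => (abs_nonneg _).trans (h i)
  calc ∑ i ∈ Finset.range N, |p.coeff i| ≤ ∑ i ∈ Finset.range N, q.coeff i :=
        Finset.sum_le_sum fun i _ => h i
    _ ≤ ∑ i ∈ Finset.range (N + (q.natDegree + 1)), q.coeff i :=
        Finset.sum_le_sum_of_subset_of_nonneg
          (Finset.range_subset_range.2 (Nat.le_add_right _ _)) (fun i _ _ => h0 i)
    _ = q.eval 1 := by
        rw [eval_eq_sum_range' (n := N + (q.natDegree + 1)) (by omega)]
        simp

theorem moment_comparison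
    (Θ : Set ℝ) (θ₀ M : ℝ) (hθ₀ : θ₀ ∈ Θ)
    (hM : IsLUB ((fun θ => |θ - θ₀|) '' Θ) M)
    (J : ℕ) (hJ : 1 ≤ J)
    (g g₀ : Measure ℝ) [IsProbabilityMeasure g] [IsProbabilityMeasure g₀]
    (hgΘ : g Θᶜ = 0) (hg₀Θ : g₀ Θᶜ = 0)
    (S : Finset ℝ) (hScard : S.card ≤ J) (hS : g₀ (↑S : Set ℝ)ᶜ = 0)
    (m : ℕ → Measure ℝ → ℝ)
    (hm : ∀ k ν, m k ν = ∫ θ, (θ - θ₀) ^ k ∂ν)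
    (k : ℕ) (hk : 2 * J < k)
    (hne : (Finset.Icc 1 (2 * J)).Nonempty) :
    |m k g - m k g₀| ≤
      (k : ℝ) * (M + 1) ^ (2 * J * k) *
        (Finset.Icc 1 (2 * J)).sup' hne (fun j => |m j g - m j g₀|) := by
  classical
  -- basic bounds
  have hM0 : 0 ≤ M := by
    have := hM.1 ⟨θ₀, hθ₀, rfl⟩
    simpa using this
  have hM1 : (1:ℝ) ≤ M + 1 := by linarith
  have habs : ∀ θ ∈ Θ, |θ - θ₀| ≤ M := fun θ hθ => hM.1 ⟨θ, hθ, rfl⟩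
  have haeg : ∀ᵐ θ ∂g, θ ∈ Θ := by
    rw [MeasureTheory.ae_iff]; exact hgΘ
  have haeg₀ : ∀ᵐ θ ∂g₀, θ ∈ Θ := by
    rw [MeasureTheory.ae_iff]; exact hg₀Θ
  -- integrability of a.e.-bounded continuous functions
  have integ : ∀ (ν : Measure ℝ) [IsProbabilityMeasure ν], (∀ᵐ θ ∂ν, θ ∈ Θ) →
      ∀ (f : ℝ → ℝ), Continuous f → ∀ C : ℝ, (∀ θ ∈ Θ, |f θ| ≤ C) → Integrable f ν := by
    intro ν _ hae f hf C hC
    refine MeasureTheory.Integrable.mono' (integrable_const C) hf.aestronglyMeasurable ?_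
    filter_upwards [hae] with θ hθ
    simpa using hC θ hθ
  -- integrability of shifted monomials
  have hmono_int : ∀ (ν : Measure ℝ) [IsProbabilityMeasure ν], (∀ᵐ θ ∂ν, θ ∈ Θ) →
      ∀ n : ℕ, Integrable (fun θ => (θ - θ₀) ^ n) ν := by
    intro ν _ hae n
    refine integ ν hae _ (((continuous_id.sub continuous_const)).pow n) (M ^ n) ?_
    intro θ hθ
    rw [abs_pow]
    exact pow_le_pow_left₀ (abs_nonneg _) (habs θ hθ) n
  -- the polynomial vanishing (to second order) at the support points of g₀
  set S' : Finset ℝ := S.filter (· ∈ Θ) with hS'def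
  set d : ℕ := 2 * S'.card with hddef
  set π : Polynomial ℝ := ∏ s ∈ S', (X - C (s - θ₀)) ^ 2 with hπdef
  set π' : Polynomial ℝ := ∏ s ∈ S', (X + C |s - θ₀|) ^ 2 with hπ'def
  have hdom : Dom π π' := by
    refine dom_prod _ _ _ fun s _ => ?_
    rw [sq, sq]
    exact dom_mul (dom_base _) (dom_base _)
  have hπmonic : π.Monic := monic_prod_of_monic _ _ fun s _ => (monic_X_sub_C _).pow 2
  have hπdeg : π.natDegree = d := by
    rw [hπdef, natDegree_prod _ _ (fun s _ => pow_ne_zero 2 (X_sub_C_ne_zero _))]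
    simp only [natDegree_pow, natDegree_X_sub_C, mul_one]
    rw [Finset.sum_const, smul_eq_mul, hddef, mul_comm]
  have hcard : S'.card ≤ J := le_trans (Finset.card_filter_le _ _) hScard
  have hd2J : d ≤ 2 * J := by omega
  have hdk : d < k := lt_of_le_of_lt hd2J hk
  -- bound on the sum of |coefficients| of π
  have hπ'eval : π'.eval 1 ≤ (M + 1) ^ (2 * J) := by
    rw [hπ'def, eval_prod]
    have h1 : ∀ s ∈ S', (X + C |s - θ₀|).eval 1 ^ 2 ≤ (M + 1) ^ 2 := by
      intro s hs
      have hsΘ : s ∈ Θ := (Finset.mem_filter.1 hs).2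
      have : |s - θ₀| ≤ M := habs s hsΘ
      have h0 : (0:ℝ) ≤ 1 + |s - θ₀| := by positivity
      simp only [eval_add, eval_X, eval_C]
      nlinarith [abs_nonneg (s - θ₀)]
    calc ∏ s ∈ S', ((X + C |s - θ₀|) ^ 2).eval 1
        = ∏ s ∈ S', ((X + C |s - θ₀|).eval 1) ^ 2 := by simp [eval_pow]
      _ ≤ ∏ s ∈ S', (M + 1) ^ 2 := Finset.prod_le_prod (fun s _ => by positivity)
          (fun s hs => h1 s hs)
      _ = (M + 1) ^ d := by rw [Finset.prod_const, ← pow_mul, hddef, mul_comm]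
      _ ≤ (M + 1) ^ (2 * J) := pow_le_pow_right₀ hM1 hd2J
  have hsumpi : ∀ N : ℕ, ∑ i ∈ Finset.range N, |π.coeff i| ≤ (M + 1) ^ (2 * J) :=
    fun N => (sum_abs_coeff_le hdom N).trans hπ'eval
  -- π is nonnegative, and bounded on Θ (after shifting)
  have hπnonneg : ∀ x : ℝ, 0 ≤ π.eval x := by
    intro x
    rw [hπdef, eval_prod]
    exact Finset.prod_nonneg fun s _ => by simp [eval_pow]; positivity
  have hπbdd : ∀ θ ∈ Θ, |π.eval (θ - θ₀)| ≤ (2 * M + 1) ^ d := by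
    intro θ hθ
    rw [hπdef, eval_prod, Finset.abs_prod]
    calc ∏ s ∈ S', |((X - C (s - θ₀)) ^ 2).eval (θ - θ₀)|
        ≤ ∏ s ∈ S', (2 * M + 1) ^ 2 := by
          refine Finset.prod_le_prod (fun s _ => abs_nonneg _) (fun s hs => ?_)
          have hsΘ : s ∈ Θ := (Finset.mem_filter.1 hs).2
          have h1 : |s - θ₀| ≤ M := habs s hsΘ
          have h2 : |θ - θ₀| ≤ M := habs θ hθ
          simp only [eval_pow, eval_sub, eval_X, eval_C, abs_pow, sq_abs]
          have : |θ - θ₀ - (s - θ₀)| ≤ 2 * M + 1 := by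
            calc |θ - θ₀ - (s - θ₀)| ≤ |θ - θ₀| + |s - θ₀| := abs_sub _ _
              _ ≤ 2 * M + 1 := by linarith
          nlinarith [abs_nonneg (θ - θ₀ - (s - θ₀)), sq_abs (θ - θ₀ - (s - θ₀))]
      _ = (2 * M + 1) ^ d := by rw [Finset.prod_const, ← pow_mul, hddef, mul_comm]
  have hπcont : Continuous fun θ : ℝ => π.eval (θ - θ₀) :=
    π.continuous.comp (continuous_id.sub continuous_const)
  -- integrability of π and of monomial × π
  have hπint0 : ∀ (ν : Measure ℝ) [IsProbabilityMeasure ν], (∀ᵐ θ ∂ν, θ ∈ Θ) →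
      Integrable (fun θ => π.eval (θ - θ₀)) ν := by
    intro ν _ hae
    exact integ ν hae _ hπcont ((2 * M + 1) ^ d) hπbdd
  have hπint : ∀ (ν : Measure ℝ) [IsProbabilityMeasure ν], (∀ᵐ θ ∂ν, θ ∈ Θ) →
      ∀ e : ℕ, Integrable (fun θ => (θ - θ₀) ^ e * π.eval (θ - θ₀)) ν := by
    intro ν _ hae e
    refine integ ν hae _ (((continuous_id.sub continuous_const).pow e).mul hπcont)
      (M ^ e * (2 * M + 1) ^ d) ?_
    intro θ hθ
    rw [abs_mul, abs_pow]
    exact mul_le_mul (pow_le_pow_left₀ (abs_nonneg _) (habs θ hθ) e) (hπbdd θ hθ)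
      (abs_nonneg _) (by positivity)
  -- pointwise expansion
  have hexp : ∀ (e : ℕ) (x : ℝ), x ^ e * π.eval x
      = ∑ i ∈ Finset.range (d + 1), π.coeff i * x ^ (e + i) := by
    intro e x
    rw [eval_eq_sum_range' (n := d + 1) (by omega), Finset.mul_sum]
    exact Finset.sum_congr rfl fun i _ => by rw [pow_add]; ring
  -- moments of x^e ⋅ π
  have moment_poly : ∀ (ν : Measure ℝ) [IsProbabilityMeasure ν], (∀ᵐ θ ∂ν, θ ∈ Θ) →
      ∀ e : ℕ, ∫ θ, (θ - θ₀) ^ e * π.eval (θ - θ₀) ∂ν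
        = ∑ i ∈ Finset.range (d + 1), π.coeff i * m (e + i) ν := by
    intro ν _ hae e
    have heq : (fun θ => (θ - θ₀) ^ e * π.eval (θ - θ₀))
        = fun θ => ∑ i ∈ Finset.range (d + 1), π.coeff i * (θ - θ₀) ^ (e + i) := by
      funext θ; exact hexp e (θ - θ₀)
    rw [heq, integral_finset_sum _ (fun i _ => (hmono_int ν hae (e + i)).const_mul _)]
    exact Finset.sum_congr rfl fun i _ => by rw [MeasureTheory.integral_const_mul, hm]
  -- the g₀-integral of x^e ⋅ π vanishes
  have hg₀zero : ∀ e : ℕ, ∫ θ, (θ - θ₀) ^ e * π.eval (θ - θ₀) ∂g₀ = 0 := by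
    intro e
    have haeS : ∀ᵐ θ ∂g₀, θ ∈ (↑S' : Set ℝ) := by
      rw [MeasureTheory.ae_iff]
      refine measure_mono_null ?_ (measure_union_null hS hg₀Θ)
      intro θ hθ
      simp only [Set.mem_setOf_eq, Finset.mem_coe, hS'def, Finset.mem_filter] at hθ
      by_cases hθΘ : θ ∈ Θ
      · exact Or.inl (by simpa [hθΘ] using hθ)
      · exact Or.inr hθΘ
    refine integral_eq_zero_of_ae ?_
    filter_upwards [haeS] with θ hθ
    have hz : π.eval (θ - θ₀) = 0 := by
      rw [hπdef, eval_prod]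
      refine Finset.prod_eq_zero (Finset.mem_coe.1 hθ) ?_
      simp [eval_pow]
    simp [hz]
  -- the max of low moment differences
  set T : ℝ := (Finset.Icc 1 (2 * J)).sup' hne (fun j => |m j g - m j g₀|) with hTdef
  have hTle : ∀ i, 1 ≤ i → i ≤ 2 * J → |m i g - m i g₀| ≤ T := by
    intro i h1 h2
    exact Finset.le_sup' (fun j => |m j g - m j g₀|) (Finset.mem_Icc.2 ⟨h1, h2⟩)
  have hT0 : 0 ≤ T := le_trans (abs_nonneg _) (hTle 1 le_rfl (by omega))
  have hdelta0 : m 0 g - m 0 g₀ = 0 := by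
    simp [hm]
  -- the g-integral of π is controlled by low moment differences
  have hpig : ∫ θ, π.eval (θ - θ₀) ∂g ≤ (M + 1) ^ (2 * J) * T := by
    have h1 : ∫ θ, π.eval (θ - θ₀) ∂g
        = ∑ i ∈ Finset.range (d + 1), π.coeff i * (m i g - m i g₀) := by
      calc ∫ θ, π.eval (θ - θ₀) ∂g
          = (∫ θ, (θ - θ₀) ^ 0 * π.eval (θ - θ₀) ∂g)
            - ∫ θ, (θ - θ₀) ^ 0 * π.eval (θ - θ₀) ∂g₀ := by
            rw [hg₀zero 0]; simp
        _ = (∑ i ∈ Finset.range (d + 1), π.coeff i * m (0 + i) g)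
            - ∑ i ∈ Finset.range (d + 1), π.coeff i * m (0 + i) g₀ := by
            rw [moment_poly g haeg 0, moment_poly g₀ haeg₀ 0]
        _ = ∑ i ∈ Finset.range (d + 1), π.coeff i * (m i g - m i g₀) := by
            rw [← Finset.sum_sub_distrib]
            exact Finset.sum_congr rfl fun i _ => by rw [zero_add]; ring
    rw [h1]
    calc ∑ i ∈ Finset.range (d + 1), π.coeff i * (m i g - m i g₀)
        ≤ ∑ i ∈ Finset.range (d + 1), |π.coeff i| * T := by
          refine Finset.sum_le_sum fun i hi => ?_
          rcases Nat.eq_zero_or_pos i with h0 | h1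
          · subst h0
            rw [hdelta0, mul_zero]
            positivity
          · refine le_trans (le_abs_self _) ?_
            rw [abs_mul]
            refine mul_le_mul_of_nonneg_left ?_ (abs_nonneg _)
            exact hTle i h1 (by have := Finset.mem_range.1 hi; omega)
      _ = (∑ i ∈ Finset.range (d + 1), |π.coeff i|) * T := (Finset.sum_mul _ _ _).symm
      _ ≤ (M + 1) ^ (2 * J) * T := mul_le_mul_of_nonneg_right (hsumpi _) hT0
  -- main claim by strong induction
  have key : ∀ n : ℕ, 1 ≤ n → |m n g - m n g₀| ≤ (n : ℝ) * (M + 1) ^ (2 * J * n) * T := by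
    intro n
    induction n using Nat.strong_induction_on with
    | _ n ih =>
      intro hn1
      by_cases hn : n ≤ 2 * J
      · refine (hTle n hn1 hn).trans ?_
        have h1 : (1 : ℝ) ≤ (n : ℝ) := by exact_mod_cast hn1
        have h2 : (1 : ℝ) ≤ (M + 1) ^ (2 * J * n) := one_le_pow₀ hM1
        have h3 : (1 : ℝ) ≤ (n : ℝ) * (M + 1) ^ (2 * J * n) := by nlinarith
        calc T = 1 * T := (one_mul T).symm
          _ ≤ (n : ℝ) * (M + 1) ^ (2 * J * n) * T := mul_le_mul_of_nonneg_right h3 hT0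
      · push_neg at hn
        obtain ⟨nn, rfl⟩ : ∃ nn, n = nn + 1 := ⟨n - 1, by omega⟩
        have hnn2J : 2 * J ≤ nn := by omega
        have hd_le : d ≤ nn + 1 := by omega
        set e : ℕ := nn + 1 - d with hedef
        have hedn : e + d = nn + 1 := by omega
        have he1 : 1 ≤ e := by omega
        -- the decomposition identity
        have hcoef : π.coeff d = 1 := by
          have := hπmonic.coeff_natDegree
          rwa [hπdeg] at this
        have hkey : m (nn + 1) g - m (nn + 1) g₀
            = (∫ θ, (θ - θ₀) ^ e * π.eval (θ - θ₀) ∂g)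
              - ∑ i ∈ Finset.range d, π.coeff i * (m (e + i) g - m (e + i) g₀) := by
          have h1 := moment_poly g haeg e
          have h2 := moment_poly g₀ haeg₀ e
          rw [hg₀zero e] at h2
          rw [Finset.sum_range_succ, hcoef, hedn] at h1 h2
          have h3 : ∑ i ∈ Finset.range d, π.coeff i * (m (e + i) g - m (e + i) g₀)
              = (∑ i ∈ Finset.range d, π.coeff i * m (e + i) g)
                - ∑ i ∈ Finset.range d, π.coeff i * m (e + i) g₀ := by
            rw [← Finset.sum_sub_distrib]
            exact Finset.sum_congr rfl fun i _ => by ring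
          rw [h3]
          linarith [h1, h2]
        -- bound the inductive terms
        have hihb : ∀ i ∈ Finset.range d, |m (e + i) g - m (e + i) g₀|
            ≤ (nn : ℝ) * (M + 1) ^ (2 * J * nn) * T := by
          intro i hi
          have hilt : e + i < nn + 1 := by have := Finset.mem_range.1 hi; omega
          refine (ih (e + i) hilt (by omega)).trans ?_
          have hle : ((e + i : ℕ) : ℝ) ≤ (nn : ℝ) := by
            exact_mod_cast Nat.lt_succ_iff.1 hilt
          have hpow : (M + 1) ^ (2 * J * (e + i)) ≤ (M + 1) ^ (2 * J * nn) :=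
            pow_le_pow_right₀ hM1 (Nat.mul_le_mul_left _ (by omega))
          refine mul_le_mul (mul_le_mul hle hpow (by positivity) (by positivity))
            le_rfl hT0 (by positivity)
        -- bound the integral term
        have habs_int : |∫ θ, (θ - θ₀) ^ e * π.eval (θ - θ₀) ∂g|
            ≤ M ^ e * ((M + 1) ^ (2 * J) * T) := by
          calc |∫ θ, (θ - θ₀) ^ e * π.eval (θ - θ₀) ∂g|
              ≤ ∫ θ, |(θ - θ₀) ^ e * π.eval (θ - θ₀)| ∂g := by
                simpa only [Real.norm_eq_abs] using
                  MeasureTheory.norm_integral_le_integral_norm (μ := g)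
                    (fun θ => (θ - θ₀) ^ e * π.eval (θ - θ₀))
            _ ≤ ∫ θ, M ^ e * π.eval (θ - θ₀) ∂g := by
                refine integral_mono_ae ((hπint g haeg e).abs)
                  ((hπint0 g haeg).const_mul _) ?_
                filter_upwards [haeg] with θ hθ
                rw [abs_mul, abs_pow, abs_of_nonneg (hπnonneg _)]
                exact mul_le_mul_of_nonneg_right
                  (pow_le_pow_left₀ (abs_nonneg _) (habs θ hθ) e) (hπnonneg _)
            _ = M ^ e * ∫ θ, π.eval (θ - θ₀) ∂g := MeasureTheory.integral_const_mul _ _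
            _ ≤ M ^ e * ((M + 1) ^ (2 * J) * T) :=
                mul_le_mul_of_nonneg_left hpig (by positivity)
        -- exponent arithmetic
        have h2n : nn + 1 ≤ 2 * J * nn := by
          calc nn + 1 ≤ 2 * nn := by omega
            _ ≤ 2 * J * nn := Nat.mul_le_mul_right nn (by omega)
        have hexpo : e + 2 * J ≤ 2 * J * (nn + 1) := by
          have h4 : e + 2 * J ≤ 2 * J * nn + 2 * J :=
            Nat.add_le_add (le_trans (by omega) h2n) le_rfl
          calc e + 2 * J ≤ 2 * J * nn + 2 * J := h4
            _ = 2 * J * (nn + 1) := by ring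
        -- combine
        have hterm1 : M ^ e * ((M + 1) ^ (2 * J) * T)
            ≤ (M + 1) ^ (2 * J * (nn + 1)) * T := by
          have hMe : M ^ e ≤ (M + 1) ^ e := pow_le_pow_left₀ hM0 (by linarith) e
          calc M ^ e * ((M + 1) ^ (2 * J) * T)
              ≤ (M + 1) ^ e * ((M + 1) ^ (2 * J) * T) := by
                refine mul_le_mul_of_nonneg_right hMe (by positivity)
            _ = (M + 1) ^ (e + 2 * J) * T := by rw [pow_add]; ring
            _ ≤ (M + 1) ^ (2 * J * (nn + 1)) * T :=
                mul_le_mul_of_nonneg_right (pow_le_pow_right₀ hM1 hexpo) hT0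
        have hterm2 : ∑ i ∈ Finset.range d,
              |π.coeff i| * ((nn : ℝ) * (M + 1) ^ (2 * J * nn) * T)
            ≤ (nn : ℝ) * (M + 1) ^ (2 * J * (nn + 1)) * T := by
          have hB : (0 : ℝ) ≤ (nn : ℝ) * (M + 1) ^ (2 * J * nn) * T := by positivity
          calc ∑ i ∈ Finset.range d,
                |π.coeff i| * ((nn : ℝ) * (M + 1) ^ (2 * J * nn) * T)
              = (∑ i ∈ Finset.range d, |π.coeff i|)
                * ((nn : ℝ) * (M + 1) ^ (2 * J * nn) * T) := (Finset.sum_mul _ _ _).symm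
            _ ≤ (M + 1) ^ (2 * J) * ((nn : ℝ) * (M + 1) ^ (2 * J * nn) * T) :=
                mul_le_mul_of_nonneg_right (hsumpi _) hB
            _ = (nn : ℝ) * ((M + 1) ^ (2 * J) * (M + 1) ^ (2 * J * nn)) * T := by ring
            _ = (nn : ℝ) * (M + 1) ^ (2 * J * (nn + 1)) * T := by
                rw [← pow_add]
                congr 2
                ring
        rw [hkey]
        calc |(∫ θ, (θ - θ₀) ^ e * π.eval (θ - θ₀) ∂g)
              - ∑ i ∈ Finset.range d, π.coeff i * (m (e + i) g - m (e + i) g₀)|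
            ≤ |∫ θ, (θ - θ₀) ^ e * π.eval (θ - θ₀) ∂g|
              + |∑ i ∈ Finset.range d, π.coeff i * (m (e + i) g - m (e + i) g₀)| :=
              abs_sub _ _
          _ ≤ M ^ e * ((M + 1) ^ (2 * J) * T) + ∑ i ∈ Finset.range d,
                |π.coeff i| * ((nn : ℝ) * (M + 1) ^ (2 * J * nn) * T) := by
              refine add_le_add habs_int ?_
              refine le_trans (Finset.abs_sum_le_sum_abs _ _) (Finset.sum_le_sum fun i hi => ?_)
              rw [abs_mul]
              exact mul_le_mul_of_nonneg_left (hihb i hi) (abs_nonneg _)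
          _ ≤ (M + 1) ^ (2 * J * (nn + 1)) * T
              + (nn : ℝ) * (M + 1) ^ (2 * J * (nn + 1)) * T := add_le_add hterm1 hterm2
          _ = ((nn + 1 : ℕ) : ℝ) * (M + 1) ^ (2 * J * (nn + 1)) * T := by
              push_cast
              ring
  exact key k (by omega)
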